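/- Let X be a 2-based Banach space with constants c, C whose natural parameterization r is continuously differentiable, let φ : ℝ → ℝ be the phase shift (r'(s) = r(φ(s)) for all s), and let P, T : ℝ → ℝ be the supercurvatures (r'(φ(s)) = −P(s)·r(s) + T(s)·r'(s) for all s). Suppose s ∈ ℝ is a point at which r is twice differentiable and φ is differentiable, and let ρ(s), τ(s) be the reals with r''(s) = −ρ(s)·r(s) + τ(s)·r'(s). Then ‖r''(s)‖ = φ'(s), ρ(s) = P(s)·φ'(s), τ(s) = T(s)·φ'(s), and |τ(s)| ≤ ((C + c)·C/c²)·|ρ(s)|. -/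

import Mathlib

noncomputable section
open MeasureTheory Set Filter
open scoped ENNReal Topology

variable {X : Type*} [NormedAddCommGroup X] [NormedSpace ℝ X]

/-- `e^{it} = cos t • e₁ + sin t • e₂` for the basis `b 0, b 1`. -/
def expV (b : Module.Basis (Fin 2) ℝ X) (t : ℝ) : X :=
  Real.cos t • b 0 + Real.sin t • b 1

/-- The polar parameterization `p(t) = e^{it}/‖e^{it}‖` of the unit sphere. -/
def polarParam (b : Module.Basis (Fin 2) ℝ X) (t : ℝ) : X :=
  ‖expV b t‖⁻¹ • expV b t

/-- The Euclidean norm `|x| = √(e₁*(x)² + e₂*(x)²)` associated to the basis. -/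
def euclNorm (b : Module.Basis (Fin 2) ℝ X) (x : X) : ℝ :=
  Real.sqrt ((b.coord 0 x)^2 + (b.coord 1 x)^2)

/-- `c = min{‖x‖ : |x| = 1}`. -/
def cConst (b : Module.Basis (Fin 2) ℝ X) : ℝ :=
  sInf (norm '' {x : X | euclNorm b x = 1})

/-- `C = max{‖x‖ : |x| = 1}`. -/
def CConst (b : Module.Basis (Fin 2) ℝ X) : ℝ :=
  sSup (norm '' {x : X | euclNorm b x = 1})

/-- The right derivative of a function `f : ℝ → X`. -/
def rightDeriv (f : ℝ → X) (t : ℝ) : X := derivWithin f (Ici t) t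

/-- The left derivative of a function `f : ℝ → X`. -/
def leftDeriv (f : ℝ → X) (t : ℝ) : X := derivWithin f (Iic t) t

/-- The arc-length function `s(t) = ∫₀^t ‖p'₊(u)‖ du`. -/
def arcLen (b : Module.Basis (Fin 2) ℝ X) (t : ℝ) : ℝ :=
  ∫ u in (0:ℝ)..t, ‖rightDeriv (polarParam b) u‖

/-- The half-length `L = s(π)` of the unit sphere. -/
def halfLen (b : Module.Basis (Fin 2) ℝ X) : ℝ := arcLen b Real.pi

/-- The inverse `t = s⁻¹` of the arc-length function. -/
def arcInv (b : Module.Basis (Fin 2) ℝ X) : ℝ → ℝ := Function.invFun (arcLen b)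

/-- The natural parameterization `r = p ∘ t` of the unit sphere. -/
def natParam (b : Module.Basis (Fin 2) ℝ X) : ℝ → X := polarParam b ∘ arcInv b

/-- Local absolute continuity of `f` with a.e. derivative `f'`, in the sense that `f` is
differentiable almost everywhere, `f'` is locally integrable, and `f` is recovered from `f'`
by integration. -/
def LocAC {E : Type*} [NormedAddCommGroup E] [NormedSpace ℝ E] [CompleteSpace E]
    (f f' : ℝ → E) : Prop :=
  (∀ᵐ t : ℝ, HasDerivAt f (f' t) t) ∧ LocallyIntegrable f' volume ∧
    ∀ a b : ℝ, a ≤ b → f b - f a = ∫ t in a..b, f' t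

/-- `s` is a Lebesgue point of `g`. -/
def LebesguePoint {E : Type*} [NormedAddCommGroup E] (g : ℝ → E) (s : ℝ) : Prop :=
  Tendsto (fun ε : ℝ => (1/ε) * ∫ t in (0:ℝ)..ε, ‖g (s + t) - g s‖) (𝓝[≠] (0:ℝ)) (𝓝 0)



/-! ### Auxiliary lemmas -/

lemma expV_ne_zero (b : Module.Basis (Fin 2) ℝ X) (t : ℝ) : expV b t ≠ 0 := by
  intro h
  have h0 := congrArg (b.coord 0) h
  have h1 := congrArg (b.coord 1) h
  simp only [expV, map_add, _root_.map_smul, Module.Basis.coord_apply, Module.Basis.repr_self, map_zero,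
    Finsupp.smul_apply, Finsupp.single_apply, smul_eq_mul] at h0 h1
  norm_num at h0 h1
  nlinarith [Real.sin_sq_add_cos_sq t]

lemma natParam_norm_one (b : Module.Basis (Fin 2) ℝ X) (t : ℝ) : ‖natParam b t‖ = 1 := by
  have h : expV b (arcInv b t) ≠ 0 := expV_ne_zero b _
  have hn : ‖expV b (arcInv b t)‖ ≠ 0 := norm_ne_zero_iff.2 h
  simp only [natParam, Function.comp_apply, polarParam, norm_smul, norm_inv, norm_norm]
  field_simp

lemma support_functional (b : Module.Basis (Fin 2) ℝ X) (hC1 : ContDiff ℝ 1 (natParam b)) (t : ℝ) :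
    ∃ f : X →L[ℝ] ℝ, ‖f‖ = 1 ∧ f (natParam b t) = 1 ∧ f (deriv (natParam b) t) = 0 := by
  obtain ⟨f, hf1, hfx⟩ := exists_dual_vector ℝ (natParam b t) (by
    intro h
    have := natParam_norm_one b t
    rw [h] at this
    norm_num at this)
  have hfx' : f (natParam b t) = 1 := by
    rw [hfx, natParam_norm_one]
    norm_num
  refine ⟨f, hf1, hfx', ?_⟩
  have hd : ∀ u : ℝ, HasDerivAt (fun u => f (natParam b u)) (f (deriv (natParam b) u)) u :=
    fun u => f.hasFDerivAt.comp_hasDerivAt u ((hC1.differentiable one_ne_zero u).hasDerivAt)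
  have hmax : IsLocalMax (fun u => f (natParam b u)) t := by
    apply Filter.Eventually.of_forall
    intro u
    calc f (natParam b u) ≤ |f (natParam b u)| := le_abs_self _
    _ ≤ ‖f‖ * ‖natParam b u‖ := f.le_opNorm _
    _ = 1 := by rw [hf1, natParam_norm_one, one_mul]
    _ = f (natParam b t) := hfx'.symm
  exact hmax.hasDerivAt_eq_zero (hd t)

lemma eq_zero_of_coords (b : Module.Basis (Fin 2) ℝ X) {z : X}
    (h0 : b.coord 0 z = 0) (h1 : b.coord 1 z = 0) : z = 0 := by
  have h := b.sum_repr z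
  rw [Fin.sum_univ_two] at h
  simp only [Module.Basis.coord_apply] at h0 h1
  rw [h0, h1, zero_smul, zero_smul, add_zero] at h
  exact h.symm

lemma coord_det_ne_zero (b : Module.Basis (Fin 2) ℝ X) {x y : X} (f : X →L[ℝ] ℝ)
    (hfx : f x = 1) (hfy : f y = 0) (hy : y ≠ 0) :
    b.coord 0 x * b.coord 1 y - b.coord 1 x * b.coord 0 y ≠ 0 := by
  intro h
  have hq' : b.coord 1 y = 0 := by
    have hz : b.coord 1 y • x - b.coord 1 x • y = 0 := by
      apply eq_zero_of_coords b
      · simp only [map_sub, _root_.map_smul, smul_eq_mul]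
        linear_combination h
      · simp only [map_sub, _root_.map_smul, smul_eq_mul]
        ring
    have := congrArg f hz
    simpa [map_sub, _root_.map_smul, hfx, hfy] using this
  have hp' : b.coord 0 y = 0 := by
    have hz : b.coord 0 y • x - b.coord 0 x • y = 0 := by
      apply eq_zero_of_coords b
      · simp only [map_sub, _root_.map_smul, smul_eq_mul]
        ring
      · simp only [map_sub, _root_.map_smul, smul_eq_mul]
        linear_combination -h
    have := congrArg f hz
    simpa [map_sub, _root_.map_smul, hfx, hfy] using this
  exact hy (eq_zero_of_coords b hp' hq')

lemma mul_pos_of_continuous_ne_zero {f : ℝ → ℝ} (hf : Continuous f)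
    (h : ∀ t, f t ≠ 0) (u v : ℝ) : 0 < f u * f v := by
  rcases (h u).lt_or_gt with hu | hu <;> rcases (h v).lt_or_gt with hv | hv
  · exact mul_pos_of_neg_of_neg hu hv
  · exfalso
    obtain ⟨z, _, hz⟩ := intermediate_value_uIcc (f := f) (a := u) (b := v) hf.continuousOn
      (Set.mem_uIcc.2 (Or.inl ⟨hu.le, hv.le⟩))
    exact h z hz
  · exfalso
    obtain ⟨z, _, hz⟩ := intermediate_value_uIcc (f := f) (a := u) (b := v) hf.continuousOn
      (Set.mem_uIcc.2 (Or.inr ⟨hv.le, hu.le⟩))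
    exact h z hz
  · exact mul_pos hu hv

lemma deriv2_nonpos {F G : ℝ → ℝ} {s d : ℝ}
    (hFG : ∀ u, HasDerivAt F (G u) u) (hmax : ∀ u, F u ≤ F s)
    (hGs : G s = 0) (hG : HasDerivAt G d s) : d ≤ 0 := by
  by_contra hd
  push_neg at hd
  have hslope : Tendsto (slope G s) (𝓝[≠] s) (𝓝 d) := hasDerivAt_iff_tendsto_slope.1 hG
  have hev : ∀ᶠ x in 𝓝[≠] s, 0 < slope G s x := hslope.eventually (eventually_gt_nhds hd)
  have hsubset : Set.Ioi s ⊆ ({s} : Set ℝ)ᶜ := by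
    intro x hx
    simp only [Set.mem_compl_iff, Set.mem_singleton_iff]
    exact fun hxs => lt_irrefl s (hxs ▸ hx)
  have hev' : ∀ᶠ x in 𝓝[>] s, 0 < slope G s x :=
    hev.filter_mono (nhdsWithin_mono s hsubset)
  obtain ⟨u, hu, hsub⟩ := mem_nhdsGT_iff_exists_Ioo_subset.1 hev'
  have hu' : s < u := hu
  set x0 := (s + u) / 2 with hx0def
  have hsx0 : s < x0 := by rw [hx0def]; linarith
  have hx0u : x0 < u := by rw [hx0def]; linarith
  obtain ⟨ξ, hξ, hξeq⟩ := exists_hasDerivAt_eq_slope F G hsx0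
    (fun x _ => (hFG x).continuousAt.continuousWithinAt) (fun x _ => hFG x)
  have hξs : 0 < ξ - s := sub_pos.2 hξ.1
  have hGξ : 0 < G ξ := by
    have h1 : 0 < slope G s ξ := hsub ⟨hξ.1, hξ.2.trans hx0u⟩
    rw [slope_def_field, hGs, sub_zero] at h1
    have h2 := mul_pos h1 hξs
    rwa [div_mul_cancel₀ _ (ne_of_gt hξs)] at h2
  have h3 : 0 < (F x0 - F s) / (x0 - s) := hξeq ▸ hGξ
  have h4 := mul_pos h3 (sub_pos.2 hsx0)
  rw [div_mul_cancel₀ _ (ne_of_gt (sub_pos.2 hsx0))] at h4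
  linarith [hmax x0]

lemma cConst_pos_le (b : Module.Basis (Fin 2) ℝ X) : 0 < cConst b ∧ cConst b ≤ CConst b := by
  haveI : FiniteDimensional ℝ X := Module.Finite.of_basis b
  have hcoord : ∀ x : X, euclNorm b x = 1 →
      (b.coord 0 x)^2 + (b.coord 1 x)^2 = 1 := by
    intro x hx
    unfold euclNorm at hx
    rwa [Real.sqrt_eq_one] at hx
  -- membership of b 0
  have hb0 : euclNorm b (b 0) = 1 := by
    unfold euclNorm
    rw [Module.Basis.coord_apply, Module.Basis.coord_apply, Module.Basis.repr_self]
    norm_num [Finsupp.single_apply, Real.sqrt_eq_one]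
  have hne : (norm '' {x : X | euclNorm b x = 1}).Nonempty := ⟨‖b 0‖, ⟨b 0, hb0, rfl⟩⟩
  -- upper bound
  have hbdd : BddAbove (norm '' {x : X | euclNorm b x = 1}) := by
    refine ⟨‖b 0‖ + ‖b 1‖, ?_⟩
    rintro - ⟨x, hx, rfl⟩
    have h1 := hcoord x hx
    have h2 : |b.coord 0 x| ≤ 1 := by nlinarith [sq_nonneg (b.coord 0 x), sq_nonneg (b.coord 1 x), sq_abs (b.coord 0 x)]
    have h3 : |b.coord 1 x| ≤ 1 := by nlinarith [sq_nonneg (b.coord 0 x), sq_nonneg (b.coord 1 x), sq_abs (b.coord 1 x)]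
    have hrep : b.coord 0 x • b 0 + b.coord 1 x • b 1 = x := by
      have h := b.sum_repr x
      rw [Fin.sum_univ_two] at h
      simpa [Module.Basis.coord_apply] using h
    calc ‖x‖ = ‖b.coord 0 x • b 0 + b.coord 1 x • b 1‖ := by rw [hrep]
    _ ≤ ‖b.coord 0 x • b 0‖ + ‖b.coord 1 x • b 1‖ := norm_add_le _ _
    _ = |b.coord 0 x| * ‖b 0‖ + |b.coord 1 x| * ‖b 1‖ := by
        rw [norm_smul, norm_smul, Real.norm_eq_abs, Real.norm_eq_abs]
    _ ≤ 1 * ‖b 0‖ + 1 * ‖b 1‖ :=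
        add_le_add (mul_le_mul_of_nonneg_right h2 (norm_nonneg _))
          (mul_le_mul_of_nonneg_right h3 (norm_nonneg _))
    _ = ‖b 0‖ + ‖b 1‖ := by ring
  -- lower bound
  obtain ⟨F0, hF0app⟩ : ∃ F0 : X →L[ℝ] ℝ, ∀ x : X, F0 x = b.coord 0 x :=
    ⟨LinearMap.toContinuousLinearMap (b.coord 0), fun x => by
      rw [LinearMap.coe_toContinuousLinearMap']⟩
  obtain ⟨F1, hF1app⟩ : ∃ F1 : X →L[ℝ] ℝ, ∀ x : X, F1 x = b.coord 1 x :=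
    ⟨LinearMap.toContinuousLinearMap (b.coord 1), fun x => by
      rw [LinearMap.coe_toContinuousLinearMap']⟩
  have hF0pos : 0 < ‖F0‖ := by
    have h1 : F0 (b 0) = 1 := by
      rw [hF0app, Module.Basis.coord_apply, Module.Basis.repr_self]
      simp
    have h2 : (1:ℝ) ≤ ‖F0‖ * ‖b 0‖ := by
      calc (1:ℝ) = ‖F0 (b 0)‖ := by rw [h1]; norm_num
      _ ≤ ‖F0‖ * ‖b 0‖ := F0.le_opNorm _
    by_contra hcon
    push_neg at hcon
    nlinarith [norm_nonneg (b 0)]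
  have hNpos : 0 < ‖F0‖ + ‖F1‖ := by positivity
  have hm : ∀ x : X, euclNorm b x = 1 → (‖F0‖ + ‖F1‖)⁻¹ ≤ ‖x‖ := by
    intro x hx
    have h1 := hcoord x hx
    have h2 : |b.coord 0 x| + |b.coord 1 x| ≥ 1 := by
      nlinarith [abs_nonneg (b.coord 0 x), abs_nonneg (b.coord 1 x),
        sq_abs (b.coord 0 x), sq_abs (b.coord 1 x),
        abs_mul_abs_self (b.coord 0 x), abs_mul_abs_self (b.coord 1 x)]
    have h3 : |b.coord 0 x| ≤ ‖F0‖ * ‖x‖ := by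
      rw [← hF0app, ← Real.norm_eq_abs]; exact F0.le_opNorm x
    have h4 : |b.coord 1 x| ≤ ‖F1‖ * ‖x‖ := by
      rw [← hF1app, ← Real.norm_eq_abs]; exact F1.le_opNorm x
    have h5 : 1 ≤ (‖F0‖ + ‖F1‖) * ‖x‖ := by nlinarith [norm_nonneg x]
    calc (‖F0‖ + ‖F1‖)⁻¹ = (‖F0‖ + ‖F1‖)⁻¹ * 1 := (mul_one _).symm
    _ ≤ (‖F0‖ + ‖F1‖)⁻¹ * ((‖F0‖ + ‖F1‖) * ‖x‖) :=
        mul_le_mul_of_nonneg_left h5 (by positivity)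
    _ = ‖x‖ := by field_simp
  have hlow : (‖F0‖ + ‖F1‖)⁻¹ ≤ cConst b := by
    apply le_csInf hne
    rintro - ⟨x, hx, rfl⟩
    exact hm x hx
  have hbddb : BddBelow (norm '' {x : X | euclNorm b x = 1}) := by
    refine ⟨0, ?_⟩
    rintro - ⟨x, _, rfl⟩
    exact norm_nonneg x
  constructor
  · exact lt_of_lt_of_le (by positivity) hlow
  · exact le_trans (csInf_le hbddb ⟨b 0, hb0, rfl⟩) (le_csSup hbdd ⟨b 0, hb0, rfl⟩)

set_option maxHeartbeats 1600000 in
/-- Relations between curvatures and supercurvatures: `‖r''(s)‖ = φ'(s)`,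
`ρ(s) = P(s)·φ'(s)`, `τ(s) = T(s)·φ'(s)` and `|τ(s)| ≤ ((C+c)·C/c²)·|ρ(s)|`. -/
theorem curvature_eq_supercurvature_mul_phase [CompleteSpace X] (b : Module.Basis (Fin 2) ℝ X)
    (hC1 : ContDiff ℝ 1 (natParam b))
    (φ P T : ℝ → ℝ)
    (hφ : ∀ u : ℝ, deriv (natParam b) u = natParam b (φ u))
    (hPT : ∀ u : ℝ, deriv (natParam b) (φ u) =
      (-(P u)) • natParam b u + T u • deriv (natParam b) u)
    (s φ' ρ τ : ℝ) (g : X)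
    (hφd : HasDerivAt φ φ' s)
    (h2 : HasDerivAt (deriv (natParam b)) g s)
    (heq : g = (-ρ) • natParam b s + τ • deriv (natParam b) s) :
    ‖g‖ = φ' ∧ ρ = P s * φ' ∧ τ = T s * φ' ∧
      |τ| ≤ ((CConst b + cConst b) * CConst b / (cConst b)^2) * |ρ| := by
  classical
  have hdiff : Differentiable ℝ (natParam b) := hC1.differentiable one_ne_zero
  have hnorm : ∀ t, ‖natParam b t‖ = 1 := natParam_norm_one b
  have hnorm' : ∀ t, ‖deriv (natParam b) t‖ = 1 := fun t => by rw [hφ t]; exact hnorm _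
  -- chain rule: g = φ' • deriv r (φ s)
  have hcomp : HasDerivAt (fun u => natParam b (φ u)) (φ' • deriv (natParam b) (φ s)) s :=
    HasDerivAt.scomp (g₁ := natParam b) (h := φ) s (hdiff (φ s)).hasDerivAt hφd
  have hfun : (fun u => natParam b (φ u)) = deriv (natParam b) := funext fun u => (hφ u).symm
  rw [hfun] at hcomp
  have hg : g = φ' • deriv (natParam b) (φ s) := h2.unique hcomp
  have hdPT : deriv (natParam b) (φ s) =
      (-(P s)) • natParam b s + T s • deriv (natParam b) s := hPT s
  obtain ⟨f, hf1, hfa, hfb'⟩ := support_functional b hC1 s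
  obtain ⟨f2, hf21, hf2b', hf2d⟩ := support_functional b hC1 (φ s)
  have hf2b'' : f2 (deriv (natParam b) s) = 1 := by rw [hφ s]; exact hf2b'
  have hb'ne : deriv (natParam b) s ≠ 0 := by
    intro h
    have h1 := hnorm' s
    rw [h, norm_zero] at h1
    norm_num at h1
  have hgexp : g = (-(φ' * P s)) • natParam b s + (φ' * T s) • deriv (natParam b) s := by
    rw [hg, hdPT]
    module
  have key : (-ρ) • natParam b s + τ • deriv (natParam b) s
      = (-(φ' * P s)) • natParam b s + (φ' * T s) • deriv (natParam b) s := by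
    rw [← heq, ← hgexp]
  have hρ : ρ = φ' * P s := by
    have h0 := congrArg f key
    simp only [map_add, _root_.map_smul, hfa, hfb', smul_eq_mul, mul_one, mul_zero, add_zero] at h0
    linarith
  have hτ : τ = φ' * T s := by
    rw [hρ] at key
    have h0 := add_left_cancel key
    exact smul_left_injective ℝ hb'ne h0
  have hT : T s = P s * f2 (natParam b s) := by
    have h0 := congrArg f2 hdPT
    simp only [hf2d, map_add, _root_.map_smul, hf2b'', smul_eq_mul, mul_one] at h0
    linarith
  -- positivity of P s
  haveI : FiniteDimensional ℝ X := Module.Finite.of_basis b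
  set F : ℝ → ℝ := fun t => b.coord 0 (natParam b t) * b.coord 1 (deriv (natParam b) t)
      - b.coord 1 (natParam b t) * b.coord 0 (deriv (natParam b) t) with hFdef
  have hFc : Continuous F := by
    have hc0 : Continuous (b.coord 0) := (b.coord 0).continuous_of_finiteDimensional
    have hc1 : Continuous (b.coord 1) := (b.coord 1).continuous_of_finiteDimensional
    have hrc : Continuous (natParam b) := hC1.continuous
    have hrc' : Continuous (deriv (natParam b)) := hC1.continuous_deriv le_rfl
    exact ((hc0.comp hrc).mul (hc1.comp hrc')).sub ((hc1.comp hrc).mul (hc0.comp hrc'))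
  have hFne : ∀ t, F t ≠ 0 := by
    intro t
    obtain ⟨ft, _, hfta, hftb⟩ := support_functional b hC1 t
    have hne : deriv (natParam b) t ≠ 0 := by
      intro h
      have h1 := hnorm' t
      rw [h, norm_zero] at h1
      norm_num at h1
    exact coord_det_ne_zero b ft hfta hftb hne
  have hsign : 0 < F (φ s) * F s := mul_pos_of_continuous_ne_zero hFc hFne _ _
  have hFφ : F (φ s) = P s * F s := by
    have h1 : natParam b (φ s) = deriv (natParam b) s := (hφ s).symm
    simp only [hFdef, h1, hdPT, map_add, _root_.map_smul, smul_eq_mul]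
    ring
  have hPpos : 0 < P s := by
    rw [hFφ] at hsign
    nlinarith [sq_nonneg (F s)]
  -- ρ ≥ 0 via second-derivative test
  have hρnn : 0 ≤ ρ := by
    have hFG : ∀ u, HasDerivAt (fun u => f (natParam b u)) (f (deriv (natParam b) u)) u :=
      fun u => f.hasFDerivAt.comp_hasDerivAt u (hdiff u).hasDerivAt
    have hmax : ∀ u, f (natParam b u) ≤ f (natParam b s) := by
      intro u
      calc f (natParam b u) ≤ |f (natParam b u)| := le_abs_self _
      _ ≤ ‖f‖ * ‖natParam b u‖ := f.le_opNorm _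
      _ = 1 := by rw [hf1, hnorm u, one_mul]
      _ = f (natParam b s) := hfa.symm
    have hG1 : HasDerivAt (fun u => f (deriv (natParam b) u)) (f g) s :=
      f.hasFDerivAt.comp_hasDerivAt s h2
    have hfg : f g ≤ 0 := deriv2_nonpos hFG hmax hfb' hG1
    have hfg' : f g = -ρ := by
      rw [heq]
      simp [map_add, _root_.map_smul, hfa, hfb']
    linarith
  have hφnn : 0 ≤ φ' := by
    by_contra h
    push_neg at h
    nlinarith [hρnn, hρ, hPpos]
  have hng : ‖g‖ = φ' := by
    rw [hg, norm_smul, Real.norm_eq_abs, hnorm' (φ s), mul_one, abs_of_nonneg hφnn]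
  -- final inequality
  have hf2a : |f2 (natParam b s)| ≤ 1 := by
    calc |f2 (natParam b s)| = ‖f2 (natParam b s)‖ := (Real.norm_eq_abs _).symm
    _ ≤ ‖f2‖ * ‖natParam b s‖ := f2.le_opNorm _
    _ = 1 := by rw [hf21, hnorm s, one_mul]
  have hτρ : |τ| ≤ |ρ| := by
    rw [hτ, hT, hρ, show φ' * (P s * f2 (natParam b s)) = (φ' * P s) * f2 (natParam b s) by ring,
      abs_mul]
    nlinarith [abs_nonneg (φ' * P s), hf2a, abs_nonneg (f2 (natParam b s))]
  obtain ⟨hcpos, hcC⟩ := cConst_pos_le b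
  have hK : 1 ≤ (CConst b + cConst b) * CConst b / (cConst b)^2 := by
    rw [le_div_iff₀ (by positivity)]
    nlinarith
  refine ⟨hng, by rw [hρ]; ring, by rw [hτ]; ring, ?_⟩
  calc |τ| ≤ |ρ| := hτρ
  _ = 1 * |ρ| := (one_mul _).symm
  _ ≤ ((CConst b + cConst b) * CConst b / (cConst b)^2) * |ρ| :=
      mul_le_mul_of_nonneg_right hK (abs_nonneg ρ)


end
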